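/- Let α ∈ ℝ and let f_α(t) = (t^α − 1 − α(t−1))/(α(α−1)) for α ∉ {0,1}, with f₀(t) = −ln t + t − 1 and f₁(t) = t ln t − t + 1. Then for all x, y ∈ (0,1): 1 ≤ (1/y)·f_α''(x/y) + (1/(1−y))·f_α''((1−x)/(1−y)); that is, 1 ≤ x^{α−2} y^{1−α} + (1−x)^{α−2} (1−y)^{1−α}. -/

import Mathlib

open Real

/-- If `b^(α-2) ≤ a^(α-2)` with `0 < b ≤ 1`, then `1 ≤ a^(α-2) * b^(1-α)`. -/
lemma aux_one_le (α a b : ℝ) (hb : 0 < b) (hb1 : b ≤ 1)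
    (h : b ^ (α - 2) ≤ a ^ (α - 2)) : 1 ≤ a ^ (α - 2) * b ^ (1 - α) := by
  have hbp : (0:ℝ) < b ^ (1 - α) := Real.rpow_pos_of_pos hb _
  have h2 : b ^ (α - 2) * b ^ (1 - α) = b ^ (-1 : ℝ) := by
    rw [← Real.rpow_add hb]; norm_num
  have h3 : (1 : ℝ) ≤ b ^ (-1 : ℝ) := by
    rw [Real.rpow_neg_one]
    have : b * b⁻¹ = 1 := mul_inv_cancel₀ hb.ne'
    nlinarith
  calc (1:ℝ) ≤ b ^ (-1:ℝ) := h3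
    _ = b ^ (α - 2) * b ^ (1 - α) := h2.symm
    _ ≤ a ^ (α - 2) * b ^ (1 - α) := mul_le_mul_of_nonneg_right h hbp.le

lemma second_ineq (α x y : ℝ) (hx : 0 < x) (hx1 : x < 1) (hy : 0 < y) (hy1 : y < 1) :
    1 ≤ x ^ (α - 2) * y ^ (1 - α) + (1 - x) ^ (α - 2) * (1 - y) ^ (1 - α) := by
  have hx' : 0 < 1 - x := by linarith
  have hy' : 0 < 1 - y := by linarith
  have t1 : (0:ℝ) < x ^ (α - 2) * y ^ (1 - α) := by positivity
  have t2 : (0:ℝ) < (1 - x) ^ (α - 2) * (1 - y) ^ (1 - α) := by positivity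
  rcases le_total α 2 with hα | hα
  · rcases le_total x y with hxy | hxy
    · have h := Real.rpow_le_rpow_of_nonpos hx hxy (by linarith : α - 2 ≤ 0)
      have := aux_one_le α x y hy hy1.le h
      linarith
    · have h := Real.rpow_le_rpow_of_nonpos hx' (by linarith : 1 - x ≤ 1 - y)
        (by linarith : α - 2 ≤ 0)
      have := aux_one_le α (1 - x) (1 - y) hy' (by linarith) h
      linarith
  · rcases le_total x y with hxy | hxy
    · have h := Real.rpow_le_rpow hy'.le (by linarith : 1 - y ≤ 1 - x)
        (by linarith : 0 ≤ α - 2)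
      have := aux_one_le α (1 - x) (1 - y) hy' (by linarith) h
      linarith
    · have h := Real.rpow_le_rpow hy.le hxy (by linarith : 0 ≤ α - 2)
      have := aux_one_le α x y hy hy1.le h
      linarith

/-- The second derivative of `fα` at positive points is `p ^ (α - 2)`. -/
lemma second_deriv_eq (α : ℝ) (fα : ℝ → ℝ)
    (h0 : α = 0 → fα = fun t => -Real.log t + t - 1)
    (h1 : α = 1 → fα = fun t => t * Real.log t - t + 1)
    (hother : α ≠ 0 → α ≠ 1 →
      fα = fun t => (t ^ α - 1 - α * (t - 1)) / (α * (α - 1)))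
    (p : ℝ) (hp : 0 < p) : deriv (deriv fα) p = p ^ (α - 2) := by
  by_cases hα0 : α = 0
  · subst hα0
    rw [h0 rfl]
    have hd : deriv (fun t => -Real.log t + t - 1) =ᶠ[nhds p] fun t => -t⁻¹ + 1 := by
      filter_upwards [Ioi_mem_nhds hp] with t ht
      have : HasDerivAt (fun t : ℝ => -Real.log t + t - 1) (-t⁻¹ + 1) t := by
        simpa using ((Real.hasDerivAt_log (ne_of_gt ht)).neg.add (hasDerivAt_id t)).sub_const 1
      exact this.deriv
    rw [hd.deriv_eq]
    have : HasDerivAt (fun t : ℝ => -t⁻¹ + 1) ((p ^ 2)⁻¹) p := by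
      simpa using (hasDerivAt_inv hp.ne').neg.add_const 1
    rw [this.deriv]
    rw [show (0:ℝ) - 2 = -((2:ℕ):ℝ) by norm_num, Real.rpow_neg hp.le, Real.rpow_natCast]
  · by_cases hα1 : α = 1
    · subst hα1
      rw [h1 rfl]
      have hd : deriv (fun t => t * Real.log t - t + 1) =ᶠ[nhds p] fun t => Real.log t := by
        filter_upwards [Ioi_mem_nhds hp] with t ht
        have : HasDerivAt (fun t : ℝ => t * Real.log t - t + 1) (Real.log t) t := by
          have h := ((hasDerivAt_id t).mul (Real.hasDerivAt_log (ne_of_gt ht))).sub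
            (hasDerivAt_id t)
          have h2 := h.add_const 1
          convert h2 using 1
          case e'_4 => rfl
          case e'_5 => rfl
          case e'_8 => rfl
          rw [id_eq, mul_inv_cancel₀ (ne_of_gt (Set.mem_Ioi.mp ht))]
          ring
        exact this.deriv
      rw [hd.deriv_eq]
      rw [Real.deriv_log]
      rw [show (1:ℝ) - 2 = -1 by norm_num, Real.rpow_neg_one]
    · rw [hother hα0 hα1]
      have hc : α * (α - 1) ≠ 0 := by
        have : α - 1 ≠ 0 := fun h => hα1 (by linarith)
        exact mul_ne_zero hα0 this
      have hd : deriv (fun t => (t ^ α - 1 - α * (t - 1)) / (α * (α - 1)))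
          =ᶠ[nhds p] fun t => (α * t ^ (α - 1) - α) / (α * (α - 1)) := by
        filter_upwards [Ioi_mem_nhds hp] with t ht
        have h : HasDerivAt (fun t : ℝ => (t ^ α - 1 - α * (t - 1)) / (α * (α - 1)))
            ((α * t ^ (α - 1) - α) / (α * (α - 1))) t := by
          have hp1 : HasDerivAt (fun t : ℝ => t ^ α) (α * t ^ (α - 1)) t := by
            simpa [mul_comm] using Real.hasDerivAt_rpow_const (p := α) (Or.inl (ne_of_gt ht))
          have hp2 : HasDerivAt (fun t : ℝ => α * (t - 1)) α t := by
            simpa using ((hasDerivAt_id t).sub_const 1).const_mul α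
          exact ((hp1.sub_const 1).sub hp2).div_const _
        exact h.deriv
      rw [hd.deriv_eq]
      have h : HasDerivAt (fun t : ℝ => (α * t ^ (α - 1) - α) / (α * (α - 1)))
          (p ^ (α - 2)) p := by
        have hp1 : HasDerivAt (fun t : ℝ => t ^ (α - 1)) ((α - 1) * p ^ (α - 1 - 1)) p := by
          simpa [mul_comm] using Real.hasDerivAt_rpow_const (p := α - 1) (Or.inl hp.ne')
        have h2 := ((hp1.const_mul α).sub_const α).div_const (α * (α - 1))
        convert h2 using 1
        case e'_4 => rfl
        case e'_5 => rfl
        have : α - 1 - 1 = α - 2 := by ring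
        rw [this]
        field_simp
      exact h.deriv

theorem pinsker_condition_renyi (α : ℝ) (fα : ℝ → ℝ)
    (h0 : α = 0 → fα = fun t => -Real.log t + t - 1)
    (h1 : α = 1 → fα = fun t => t * Real.log t - t + 1)
    (hother : α ≠ 0 → α ≠ 1 →
      fα = fun t => (t ^ α - 1 - α * (t - 1)) / (α * (α - 1))) :
    ∀ x y : ℝ, 0 < x → x < 1 → 0 < y → y < 1 →
      (1 ≤ (1 / y) * deriv (deriv fα) (x / y)
          + (1 / (1 - y)) * deriv (deriv fα) ((1 - x) / (1 - y)))
        ∧ 1 ≤ x ^ (α - 2) * y ^ (1 - α) + (1 - x) ^ (α - 2) * (1 - y) ^ (1 - α) := by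
  intro x y hx hx1 hy hy1
  have hx' : 0 < 1 - x := by linarith
  have hy' : 0 < 1 - y := by linarith
  have key := second_ineq α x y hx hx1 hy hy1
  refine ⟨?_, key⟩
  rw [second_deriv_eq α fα h0 h1 hother (x / y) (by positivity),
    second_deriv_eq α fα h0 h1 hother ((1 - x) / (1 - y)) (by positivity)]
  have e : ∀ a b : ℝ, 0 < a → 0 < b →
      (1 / b) * (a / b) ^ (α - 2) = a ^ (α - 2) * b ^ (1 - α) := by
    intro a b ha hb
    rw [show (1:ℝ) - α = -(α - 2) + -1 by ring, Real.rpow_add hb, Real.rpow_neg hb.le,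
      Real.rpow_neg_one, Real.div_rpow ha.le hb.le, div_eq_mul_inv]
    ring
  rw [e x y hx hy, e (1 - x) (1 - y) hx' hy']
  exact key
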